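/- arXiv:1711.01924 — 3 statements merged into one kernel-verified Lean document; each statement's English description precedes it below -/
import Mathlib

section
/- The number of sequences a_1, ..., a_s of positive integers with a_1 = 1, a_s = t, and consecutive differences in {1, 0, -1}, equals the sum over i from 0 to floor((s-t)/2) of (t/(t+i)) * binomial(s-1, s-t-2i) * binomial(t+2i-1, i). -/
/-- `D1 s t`: number of sequences `a_1,...,a_s` of positive integers with
`a_1 = 1`, `a_s = t`, and consecutive differences in `{1,0,-1}`. -/
noncomputable def D1 (s t : ℕ) : ℕ :=
  Nat.card {a : Fin s → ℕ //
    (∀ i : Fin s, (i : ℕ) = 0 → a i = 1) ∧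
    (∀ i : Fin s, (i : ℕ) = s - 1 → a i = t) ∧
    (∀ i, 1 ≤ a i) ∧
    (∀ i j : Fin s, (j : ℕ) = (i : ℕ) + 1 →
      a j = a i + 1 ∨ a j = a i ∨ a i = a j + 1)}

/-- Path predicate: `a : Fin (n+1) → ℕ` is a path of `n` steps from `1` to `t`,
staying `≥ 1`, with steps in `{1,0,-1}`. -/
def Q (n t : ℕ) (a : Fin (n+1) → ℕ) : Prop :=
  a 0 = 1 ∧ a (Fin.last n) = t ∧ (∀ i, 1 ≤ a i) ∧
  ∀ i : Fin n, a i.succ = a i.castSucc + 1 ∨ a i.succ = a i.castSucc ∨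
    a i.castSucc = a i.succ + 1

/-- Recursive count of paths. -/
def f : ℕ → ℕ → ℕ
  | 0, t => if t = 1 then 1 else 0
  | n+1, t => (if 2 ≤ t then f n (t-1) else 0) + f n t + f n (t+1)

lemma Q_not_zero (n : ℕ) (a : Fin (n+1) → ℕ) : ¬ Q n 0 a := by
  rintro ⟨_, h2, h3, _⟩
  have := h3 (Fin.last n); omega

lemma Q_init {n t : ℕ} {a : Fin (n+2) → ℕ} (h : Q (n+1) t a) :
    Q n (a (Fin.last n).castSucc) (Fin.init a) := by
  obtain ⟨h1, h2, h3, h4⟩ := h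
  refine ⟨?_, ?_, fun i => h3 _, fun i => ?_⟩
  · simpa [Fin.init] using h1
  · rfl
  · have := h4 i.castSucc
    simp only [Fin.init, Fin.succ_castSucc] at *
    exact this

lemma Q_last_step {n t : ℕ} {a : Fin (n+2) → ℕ} (h : Q (n+1) t a) :
    t = a (Fin.last n).castSucc + 1 ∨ t = a (Fin.last n).castSucc ∨
      a (Fin.last n).castSucc = t + 1 := by
  obtain ⟨h1, h2, h3, h4⟩ := h
  have := h4 (Fin.last n)
  rw [Fin.succ_last, h2] at this
  exact this

lemma Q_snoc {n t u : ℕ} {b : Fin (n+1) → ℕ} (hb : Q n u b) (ht : 1 ≤ t)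
    (hrel : t = u + 1 ∨ t = u ∨ u = t + 1) : Q (n+1) t (Fin.snoc b t) := by
  obtain ⟨h1, h2, h3, h4⟩ := hb
  refine ⟨?_, ?_, ?_, ?_⟩
  · have h0 : ((0 : Fin (n+1)).castSucc) = (0 : Fin (n+2)) := Fin.castSucc_zero
    rw [← h0, Fin.snoc_castSucc]; exact h1
  · rw [Fin.snoc_last]
  · intro i
    rcases Fin.eq_castSucc_or_eq_last i with ⟨j, rfl⟩ | rfl
    · rw [Fin.snoc_castSucc]; exact h3 j
    · rw [Fin.snoc_last]; exact ht
  · intro i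
    rcases Fin.eq_castSucc_or_eq_last i with ⟨j, rfl⟩ | rfl
    · rw [Fin.succ_castSucc, Fin.snoc_castSucc, Fin.snoc_castSucc]
      exact h4 j
    · rw [Fin.succ_last, Fin.snoc_last, Fin.snoc_castSucc, h2]
      exact hrel

/-- Peeling off the last vertex of a path. -/
noncomputable def peelEquiv (n t : ℕ) (ht : 1 ≤ t) :
    {a : Fin (n+2) → ℕ // Q (n+1) t a} ≃
      ({b : Fin (n+1) → ℕ // Q n (t-1) b} ⊕ {b : Fin (n+1) → ℕ // Q n t b} ⊕
        {b : Fin (n+1) → ℕ // Q n (t+1) b}) where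
  toFun := fun ⟨a, ha⟩ =>
    if h : a (Fin.last n).castSucc = t + 1 then
      Sum.inr (Sum.inr ⟨Fin.init a, h ▸ Q_init ha⟩)
    else if h2 : a (Fin.last n).castSucc = t then
      Sum.inr (Sum.inl ⟨Fin.init a, h2 ▸ Q_init ha⟩)
    else
      Sum.inl ⟨Fin.init a, by
        have h3 := Q_last_step ha
        have h4 : a (Fin.last n).castSucc = t - 1 := by omega
        exact h4 ▸ Q_init ha⟩
  invFun := fun x =>
    match x with
    | Sum.inl ⟨b, hb⟩ => ⟨Fin.snoc b t, Q_snoc hb ht (by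
        have := hb.2.2.1 (Fin.last n); have h2 := hb.2.1; left; omega)⟩
    | Sum.inr (Sum.inl ⟨b, hb⟩) => ⟨Fin.snoc b t, Q_snoc hb ht (Or.inr (Or.inl rfl))⟩
    | Sum.inr (Sum.inr ⟨b, hb⟩) => ⟨Fin.snoc b t, Q_snoc hb ht (Or.inr (Or.inr rfl))⟩
  left_inv := by
    rintro ⟨a, ha⟩
    have key : Fin.snoc (Fin.init a) t = a := by
      conv_rhs => rw [← Fin.snoc_init_self a]
      rw [ha.2.1]
    dsimp only
    split_ifs <;> exact Subtype.ext key
  right_inv := by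
    rintro (⟨b, hb⟩ | ⟨b, hb⟩ | ⟨b, hb⟩) <;> dsimp only
    · have hu : (Fin.snoc b t : Fin (n+2) → ℕ) (Fin.last n).castSucc = t - 1 := by
        rw [Fin.snoc_castSucc]; exact hb.2.1
      have h1 : 1 ≤ t - 1 := by
        have := hb.2.2.1 (Fin.last n); have := hb.2.1; omega
      rw [dif_neg (by omega), dif_neg (by omega)]
      simp [Fin.init_snoc]
    · have hu : (Fin.snoc b t : Fin (n+2) → ℕ) (Fin.last n).castSucc = t := by
        rw [Fin.snoc_castSucc]; exact hb.2.1
      rw [dif_neg (by omega), dif_pos hu]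
      simp [Fin.init_snoc]
    · have hu : (Fin.snoc b t : Fin (n+2) → ℕ) (Fin.last n).castSucc = t + 1 := by
        rw [Fin.snoc_castSucc]; exact hb.2.1
      rw [dif_pos hu]
      simp [Fin.init_snoc]

lemma Q_finite (n : ℕ) : ∀ t, Finite {a : Fin (n+1) → ℕ // Q n t a} := by
  induction n with
  | zero =>
    intro t
    have : Subsingleton {a : Fin 1 → ℕ // Q 0 t a} := by
      constructor
      rintro ⟨a, ha⟩ ⟨b, hb⟩
      apply Subtype.ext
      show a = b
      funext i
      rw [Fin.fin_one_eq_zero i, ha.1, hb.1]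
    exact Finite.of_subsingleton
  | succ n ih =>
    intro t
    rcases Nat.eq_zero_or_pos t with rfl | ht
    · have : IsEmpty {a : Fin (n+2) → ℕ // Q (n+1) 0 a} :=
        ⟨fun ⟨a, ha⟩ => Q_not_zero _ _ ha⟩
      infer_instance
    · have i1 := ih (t-1); have i2 := ih t; have i3 := ih (t+1)
      exact Finite.of_equiv _ (peelEquiv n t ht).symm

lemma card_Q (n : ℕ) : ∀ t, 1 ≤ t → Nat.card {a : Fin (n+1) → ℕ // Q n t a} = f n t := by
  induction n with
  | zero =>
    intro t ht
    rcases eq_or_ne t 1 with rfl | h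
    · have : Unique {a : Fin 1 → ℕ // Q 0 1 a} := by
        refine ⟨⟨⟨fun _ => 1, rfl, rfl, fun _ => le_refl 1, fun i => i.elim0⟩⟩, ?_⟩
        rintro ⟨a, ha⟩
        apply Subtype.ext
        show a = fun _ => 1
        funext i
        rw [Fin.fin_one_eq_zero i]; exact ha.1
      rw [Nat.card_unique]; simp [f]
    · have : IsEmpty {a : Fin 1 → ℕ // Q 0 t a} := by
        constructor; rintro ⟨a, h1, h2, _⟩
        have he : (Fin.last 0) = (0 : Fin 1) := rfl
        rw [he, h1] at h2; omega
      rw [Nat.card_of_isEmpty]; simp [f, h]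
  | succ n ih =>
    intro t ht
    have i1 := Q_finite n (t-1); have i2 := Q_finite n t; have i3 := Q_finite n (t+1)
    rw [Nat.card_congr (peelEquiv n t ht), Nat.card_sum, Nat.card_sum]
    show _ = (if 2 ≤ t then f n (t-1) else 0) + f n t + f n (t+1)
    rw [ih t ht, ih (t+1) (by omega), add_assoc]
    congr 1
    rcases Nat.lt_or_ge t 2 with h | h
    · have : IsEmpty {b : Fin (n+1) → ℕ // Q n (t-1) b} := by
        constructor; rintro ⟨b, hb⟩
        have h1 : t - 1 = 0 := by omega
        exact Q_not_zero _ _ (h1 ▸ hb)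
      rw [Nat.card_of_isEmpty, if_neg (by omega)]
    · rw [ih (t-1) (by omega), if_pos h]

lemma D1_eq_card (n t : ℕ) : D1 (n+1) t = Nat.card {a : Fin (n+1) → ℕ // Q n t a} := by
  unfold D1
  apply Nat.card_congr
  apply Equiv.subtypeEquivRight
  intro a
  constructor
  · rintro ⟨h1, h2, h3, h4⟩
    refine ⟨h1 0 rfl, h2 (Fin.last n) (by simp), h3, fun i => ?_⟩
    exact h4 i.castSucc i.succ (by simp)
  · rintro ⟨h1, h2, h3, h4⟩
    refine ⟨fun i hi => ?_, fun i hi => ?_, h3, fun i j hij => ?_⟩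
    · have : i = 0 := Fin.ext hi
      rw [this]; exact h1
    · have : i = Fin.last n := Fin.ext (by simpa using hi)
      rw [this]; exact h2
    · have hilt : (i : ℕ) < n := by
        have := j.isLt; omega
      have hi' : i = (⟨(i : ℕ), hilt⟩ : Fin n).castSucc := Fin.ext rfl
      have hj' : j = (⟨(i : ℕ), hilt⟩ : Fin n).succ := Fin.ext (by simp [hij])
      rw [hi', hj']
      exact h4 _

lemma D1_eq_f (n t : ℕ) (ht : 1 ≤ t) : D1 (n+1) t = f n t := by
  rw [D1_eq_card, card_Q n t ht]

/-! ### Part B: the binomial sum satisfies the same recurrence -/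

/-- Ballot-number term. -/
noncomputable def B (t i : ℕ) : ℚ := (t : ℚ) / (t + i) * Nat.choose (t + 2*i - 1) i

noncomputable def F (n t : ℕ) : ℚ :=
  ∑ i ∈ Finset.range (n+1), B t i * Nat.choose n (t - 1 + 2*i)

lemma B_zero (t : ℕ) (ht : 1 ≤ t) : B t 0 = 1 := by
  have htQ : (t : ℚ) ≠ 0 := Nat.cast_ne_zero.mpr (by omega)
  unfold B
  simp only [Nat.mul_zero, Nat.add_zero, Nat.choose_zero_right, Nat.cast_one, Nat.cast_zero,
    add_zero, mul_one]
  exact div_self htQ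

lemma ballot_rec (v i : ℕ) : B (v+2) (i+1) = B (v+1) (i+1) + B (v+3) i := by
  unfold B
  have e1 : v + 2 + 2 * (i + 1) - 1 = (v + 2*i + 2) + 1 := by omega
  have e2 : v + 1 + 2 * (i + 1) - 1 = v + 2*i + 2 := by omega
  have e3 : v + 3 + 2 * i - 1 = v + 2*i + 2 := by omega
  rw [e1, e2, e3]
  have pascal : (v + 2*i + 2 + 1).choose (i+1) = (v + 2*i + 2).choose i + (v + 2*i + 2).choose (i+1) :=
    Nat.choose_succ_succ _ _
  have key : (v + 2*i + 2).choose (i+1) * (i+1) = (v + 2*i + 2).choose i * (v + i + 2) := by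
    have := Nat.choose_succ_right_eq (v + 2*i + 2) i
    have h : v + 2*i + 2 - i = v + i + 2 := by omega
    rw [h] at this
    exact this
  have keyQ : ((v + 2*i + 2).choose (i+1) : ℚ) * (i+1) = (v + 2*i + 2).choose i * (v + i + 2) := by
    exact_mod_cast congrArg (Nat.cast : ℕ → ℚ) key
  rw [pascal]
  push_cast
  have d1 : ((v:ℚ) + 2) + (i + 1) ≠ 0 := by positivity
  have d2 : ((v:ℚ) + 1) + (i + 1) ≠ 0 := by positivity
  have d3 : ((v:ℚ) + 3) + i ≠ 0 := by positivity
  field_simp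
  ring_nf
  ring_nf at keyQ
  nlinarith [keyQ, sq_nonneg ((v:ℚ)+i)]

lemma ballot_one (i : ℕ) : B 1 (i+1) = B 2 i := by
  unfold B
  have e1 : 1 + 2 * (i + 1) - 1 = 2*i + 2 := by omega
  have e2 : 2 + 2 * i - 1 = 2*i + 1 := by omega
  rw [e1, e2]
  have key : (2*i + 2).choose (i+1) = 2 * (2*i + 1).choose i := by
    have pascal : (2*i + 2).choose (i+1) = (2*i+1).choose i + (2*i+1).choose (i+1) :=
      Nat.choose_succ_succ _ _
    have symm : (2*i+1).choose (i+1) = (2*i+1).choose i := by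
      have h3 := Nat.choose_symm (n := 2*i+1) (k := i+1) (by omega)
      have h : 2*i+1 - (i+1) = i := by omega
      rw [h] at h3
      exact h3.symm
    omega
  rw [key]
  push_cast
  have hd : ((1:ℚ) + (i + 1)) = (2 + i) := by ring
  rw [hd]
  ring

lemma choose_term_zero {n k : ℕ} (h : n < k) : ((n.choose k : ℚ)) = 0 := by
  rw [Nat.choose_eq_zero_of_lt h]; norm_cast

lemma F_pad (n t m : ℕ) (hm : n + 1 ≤ m) :
    F n t = ∑ i ∈ Finset.range m, B t i * Nat.choose n (t - 1 + 2*i) := by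
  unfold F
  apply Finset.sum_subset
  · exact Finset.range_subset_range.mpr hm
  · intro i _ hi
    simp only [Finset.mem_range, not_lt] at hi
    rw [Nat.choose_eq_zero_of_lt (by omega)]
    simp

lemma F_shrink (n t : ℕ) (ht : 1 ≤ t) (htn : t ≤ n + 1) :
    F n t = ∑ i ∈ Finset.range ((n + 1 - t)/2 + 1), B t i * Nat.choose n (t - 1 + 2*i) := by
  unfold F
  symm
  apply Finset.sum_subset
  · apply Finset.range_subset_range.mpr; omega
  · intro i _ hi
    simp only [Finset.mem_range, not_lt] at hi
    rw [Nat.choose_eq_zero_of_lt (by omega)]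
    simp

lemma f_eq_F (n : ℕ) : ∀ t, 1 ≤ t → (f n t : ℚ) = F n t := by
  induction n with
  | zero =>
    intro t ht
    unfold F
    rw [Finset.sum_range_one, B_zero t ht]
    rcases eq_or_ne t 1 with rfl | h
    · simp [f]
    · have h2 : ∃ k, t - 1 = k + 1 := ⟨t - 2, by omega⟩
      obtain ⟨k, hk⟩ := h2
      rw [Nat.mul_zero, Nat.add_zero, hk, Nat.choose_zero_succ]
      simp [f, h]
  | succ n ih =>
    intro t ht
    have hrec : (f (n+1) t : ℚ) = (if 2 ≤ t then (f n (t-1) : ℚ) else 0) + f n t + f n (t+1) := by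
      show ((if 2 ≤ t then f n (t-1) else 0) + f n t + f n (t+1) : ℕ) = (_ : ℚ)
      push_cast
      split_ifs <;> simp
    rw [hrec]
    rcases Nat.lt_or_ge t 2 with h | h
    · -- t = 1
      have ht1 : t = 1 := by omega
      subst ht1
      rw [if_neg (by omega), zero_add, ih 1 (by omega), ih 2 (by omega)]
      have hF1 : F (n+1) 1 = ∑ i ∈ Finset.range (n+2), B 1 i * ((n+1).choose (2*i) : ℚ) := by
        unfold F
        apply Finset.sum_congr rfl
        intro i _
        have hx : 1 - 1 + 2*i = 2*i := by omega
        rw [hx]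
      have hF1n : F n 1 = ∑ i ∈ Finset.range (n+2), B 1 i * (n.choose (2*i) : ℚ) := by
        rw [F_pad n 1 (n+2) (by omega)]
        apply Finset.sum_congr rfl
        intro i _
        have hx : 1 - 1 + 2*i = 2*i := by omega
        rw [hx]
      have hF2 : F n 2 = ∑ i ∈ Finset.range (n+1), B 2 i * (n.choose (2*i+1) : ℚ) := by
        unfold F
        apply Finset.sum_congr rfl
        intro i _
        have hx : 2 - 1 + 2*i = 2*i+1 := by omega
        rw [hx]
      have expand1 : F (n+1) 1 =
          (∑ i ∈ Finset.range (n+1), B 1 (i+1) * ((n+1).choose (2*i+2) : ℚ)) + 1 := by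
        rw [hF1]
        have peel : (∑ i ∈ Finset.range (n+2), B 1 i * ((n+1).choose (2*i) : ℚ)) =
            (∑ i ∈ Finset.range (n+1), B 1 (i+1) * ((n+1).choose (2*(i+1)) : ℚ)) +
              B 1 0 * ((n+1).choose (2*0) : ℚ) := Finset.sum_range_succ' _ _
        rw [peel, B_zero 1 (by omega)]
        simp only [Nat.mul_zero, Nat.choose_zero_right, Nat.cast_one, mul_one, one_mul]
        congr 1
      have expand2 : F n 1 =
          (∑ i ∈ Finset.range (n+1), B 1 (i+1) * (n.choose (2*i+2) : ℚ)) + 1 := by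
        rw [hF1n]
        have peel : (∑ i ∈ Finset.range (n+2), B 1 i * (n.choose (2*i) : ℚ)) =
            (∑ i ∈ Finset.range (n+1), B 1 (i+1) * (n.choose (2*(i+1)) : ℚ)) +
              B 1 0 * (n.choose (2*0) : ℚ) := Finset.sum_range_succ' _ _
        rw [peel, B_zero 1 (by omega)]
        simp only [Nat.mul_zero, Nat.choose_zero_right, Nat.cast_one, mul_one, one_mul]
        congr 1
      have inner : ∀ i : ℕ, B 1 (i+1) * ((n+1).choose (2*i+2) : ℚ) =
          B 2 i * (n.choose (2*i+1) : ℚ) + B 1 (i+1) * (n.choose (2*i+2) : ℚ) := by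
        intro i
        have pas : (n+1).choose (2*i+1+1) = n.choose (2*i+1) + n.choose (2*i+1+1) :=
          Nat.choose_succ_succ _ _
        have hx : 2*i+1+1 = 2*i+2 := by omega
        rw [hx] at pas
        rw [pas, ballot_one i]
        push_cast
        ring
      rw [expand1, Finset.sum_congr rfl (fun i _ => inner i), Finset.sum_add_distrib,
        ← hF2, expand2]
      ring
    · -- t ≥ 2
      obtain ⟨u, rfl⟩ : ∃ u, t = u + 2 := ⟨t - 2, by omega⟩
      rw [if_pos h]
      have e1 : u + 2 - 1 = u + 1 := by omega
      rw [e1, ih (u+1) (by omega), ih (u+2) (by omega), ih (u+3) (by omega)]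
      have hFt : F (n+1) (u+2) = ∑ i ∈ Finset.range (n+2),
          B (u+2) i * ((n+1).choose (u+1+2*i) : ℚ) := by
        unfold F
        apply Finset.sum_congr rfl
        intro i _
        have hx : u + 2 - 1 + 2*i = u+1+2*i := by omega
        rw [hx]
      have hFt2 : F n (u+2) = ∑ i ∈ Finset.range (n+2),
          B (u+2) i * (n.choose (u+1+2*i) : ℚ) := by
        rw [F_pad n (u+2) (n+2) (by omega)]
        apply Finset.sum_congr rfl
        intro i _
        have hx : u + 2 - 1 + 2*i = u+1+2*i := by omega
        rw [hx]
      have hFt1 : F n (u+1) = ∑ i ∈ Finset.range (n+2),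
          B (u+1) i * (n.choose (u+2*i) : ℚ) := by
        rw [F_pad n (u+1) (n+2) (by omega)]
        apply Finset.sum_congr rfl
        intro i _
        have hx : u + 1 - 1 + 2*i = u+2*i := by omega
        rw [hx]
      have hFt3 : F n (u+3) = ∑ i ∈ Finset.range (n+1),
          B (u+3) i * (n.choose (u+2*(i+1)) : ℚ) := by
        unfold F
        apply Finset.sum_congr rfl
        intro i _
        have hx : u + 3 - 1 + 2*i = u+2*(i+1) := by omega
        rw [hx]
      have pas : ∀ i : ℕ, ((n+1).choose (u+1+2*i) : ℚ) =
          (n.choose (u+2*i) : ℚ) + (n.choose (u+1+2*i) : ℚ) := by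
        intro i
        have hp : (n+1).choose (u+2*i+1) = n.choose (u+2*i) + n.choose (u+2*i+1) :=
          Nat.choose_succ_succ _ _
        have hx : u+1+2*i = u+2*i+1 := by omega
        rw [hx]
        exact_mod_cast hp
      have split1 : F (n+1) (u+2) =
          (∑ i ∈ Finset.range (n+2), B (u+2) i * (n.choose (u+2*i) : ℚ)) +
            F n (u+2) := by
        rw [hFt, hFt2, ← Finset.sum_add_distrib]
        apply Finset.sum_congr rfl
        intro i _
        rw [pas i]
        ring
      rw [split1]
      have part1 : ∑ i ∈ Finset.range (n+2), B (u+2) i * (n.choose (u+2*i) : ℚ) =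
          F n (u+1) + F n (u+3) := by
        rw [Finset.sum_range_succ']
        have inner : ∀ i : ℕ, B (u+2) (i+1) * (n.choose (u+2*(i+1)) : ℚ) =
            B (u+1) (i+1) * (n.choose (u+2*(i+1)) : ℚ) +
              B (u+3) i * (n.choose (u+2*(i+1)) : ℚ) := by
          intro i
          rw [ballot_rec u i]
          ring
        rw [Finset.sum_congr rfl (fun i _ => inner i), Finset.sum_add_distrib]
        have peelR : (∑ i ∈ Finset.range (n+2), B (u+1) i * (n.choose (u+2*i) : ℚ)) =
            (∑ i ∈ Finset.range (n+1), B (u+1) (i+1) * (n.choose (u+2*(i+1)) : ℚ)) +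
              B (u+1) 0 * (n.choose (u+2*0) : ℚ) := Finset.sum_range_succ' _ _
        rw [hFt1, peelR, ← hFt3, B_zero (u+2) (by omega), B_zero (u+1) (by omega)]
        ring
      rw [part1]
      ring
theorem stmt2 (s t : ℕ) (h1 : 1 ≤ t) (h2 : t ≤ s) :
    (D1 s t : ℚ) = ∑ i ∈ Finset.range ((s - t) / 2 + 1),
      (t : ℚ) / (t + i) * Nat.choose (s - 1) (s - t - 2 * i) *
        Nat.choose (t + 2 * i - 1) i := by
  obtain ⟨n, rfl⟩ : ∃ n, s = n + 1 := ⟨s - 1, by omega⟩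
  rw [D1_eq_f n t h1, f_eq_F n t h1]
  have small : ∀ i ∈ Finset.range ((n + 1 - t) / 2 + 1),
      (t : ℚ) / (t + i) * ((n + 1 - 1).choose (n + 1 - t - 2 * i) : ℚ) *
        ((t + 2 * i - 1).choose i : ℚ) =
      B t i * ((n).choose (t - 1 + 2*i) : ℚ) := by
    intro i hi
    simp only [Finset.mem_range] at hi
    have h2i : 2 * i ≤ n + 1 - t := by omega
    have hsym : (n + 1 - 1).choose (n + 1 - t - 2 * i) = n.choose (t - 1 + 2*i) := by
      have hk : t - 1 + 2*i ≤ n := by omega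
      have := Nat.choose_symm hk
      have he : n - (t - 1 + 2*i) = n + 1 - t - 2*i := by omega
      rw [he] at this
      have hn : n + 1 - 1 = n := by omega
      rw [hn, this]
    rw [hsym]
    unfold B
    ring
  rw [Finset.sum_congr rfl small]
  exact F_shrink n t h1 h2
end

section
/- For m ≤ n ≤ 2m, the partial sum H(n,m) = Σ_{i=1}^{m} D^1(n,i) satisfies H(n,m) = D(n,n) - Σ_{i=m}^{n-1} 3^{n-i-1} · D^1(i,m), where D(n,n) = Σ_{i=1}^{n} D^1(n,i) is computed in the n×n table (i.e., with heights allowed up to n). -/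
/-- `D1T m s t`: number of sequences `a_1,...,a_s` with `a_1 = 1`, `a_s = t`,
all entries in `{1,...,m}`, and consecutive differences in `{1,0,-1}`. -/
noncomputable def D1T (m s t : ℕ) : ℕ :=
  Nat.card {a : Fin s → ℕ //
    (∀ i : Fin s, (i : ℕ) = 0 → a i = 1) ∧
    (∀ i : Fin s, (i : ℕ) = s - 1 → a i = t) ∧
    (∀ i, 1 ≤ a i ∧ a i ≤ m) ∧
    (∀ i j : Fin s, (j : ℕ) = (i : ℕ) + 1 →
      a j = a i + 1 ∨ a j = a i ∨ a i = a j + 1)}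

def PathPred (m s t : ℕ) (a : Fin s → ℕ) : Prop :=
    (∀ i : Fin s, (i : ℕ) = 0 → a i = 1) ∧
    (∀ i : Fin s, (i : ℕ) = s - 1 → a i = t) ∧
    (∀ i, 1 ≤ a i ∧ a i ≤ m) ∧
    (∀ i j : Fin s, (j : ℕ) = (i : ℕ) + 1 →
      a j = a i + 1 ∨ a j = a i ∨ a i = a j + 1)


def PathSet (m s t : ℕ) : Set (Fin s → ℕ) := {a | PathPred m s t a}

lemma D1T_eq_card (m s t : ℕ) : D1T m s t = Nat.card (PathSet m s t) := rfl

lemma pathPred_iff (m s t : ℕ) (a : Fin (s+1) → ℕ) :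
    PathPred m (s+1) t a ↔
      a 0 = 1 ∧ a (Fin.last s) = t ∧ (∀ i, 1 ≤ a i ∧ a i ≤ m) ∧
      (∀ i : Fin s, a i.succ = a i.castSucc + 1 ∨ a i.succ = a i.castSucc ∨
        a i.castSucc = a i.succ + 1) := by
  constructor
  · rintro ⟨c1, c2, c3, c4⟩
    refine ⟨c1 0 rfl, c2 (Fin.last s) (by simp), c3, fun i => c4 i.castSucc i.succ (by simp)⟩
  · rintro ⟨c1, c2, c3, c4⟩
    refine ⟨?_, ?_, c3, ?_⟩
    · intro i hi
      have : i = 0 := Fin.ext (by simpa using hi)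
      rw [this, c1]
    · intro i hi
      have : i = Fin.last s := Fin.ext (by simpa using hi)
      rw [this, c2]
    · intro i j hj
      have hilt : (i : ℕ) < s := by omega
      have hi' : i = (⟨i, hilt⟩ : Fin s).castSucc := Fin.ext rfl
      have hj' : j = (⟨i, hilt⟩ : Fin s).succ := Fin.ext (by simp [hj])
      rw [hi', hj']
      exact c4 _

lemma pathSet_finite (m s t : ℕ) : (PathSet m s t).Finite := by
  apply Set.Finite.subset (Set.Finite.pi (fun _ : Fin s => Set.finite_Iic m))
  rintro a ⟨-, -, c3, -⟩ i -
  exact (c3 i).2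

instance pathSet_finite' (m s t : ℕ) : Finite (PathSet m s t) := (pathSet_finite m s t)

-- height bound
lemma height_le (m s t : ℕ) (a : Fin (s+1) → ℕ) (ha : a ∈ PathSet m (s+1) t) :
    ∀ k (h : k < s + 1), a ⟨k, h⟩ ≤ k + 1 := by
  rw [PathSet, Set.mem_setOf_eq, pathPred_iff] at ha
  obtain ⟨c1, c2, c3, c4⟩ := ha
  intro k
  induction k with
  | zero => intro h; exact le_of_eq c1
  | succ k ih =>
    intro h
    have hk : k < s := by omega
    have := c4 ⟨k, hk⟩
    have h1 : (⟨k, hk⟩ : Fin s).castSucc = ⟨k, by omega⟩ := rfl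
    have h2 : (⟨k, hk⟩ : Fin s).succ = ⟨k+1, h⟩ := rfl
    rw [h1, h2] at this
    have := ih (by omega)
    omega

lemma coheight_le (m s t : ℕ) (a : Fin (s+1) → ℕ) (ha : a ∈ PathSet m (s+1) t) :
    ∀ k (h : k ≤ s), a ⟨s - k, by omega⟩ ≤ t + k := by
  rw [PathSet, Set.mem_setOf_eq, pathPred_iff] at ha
  obtain ⟨c1, c2, c3, c4⟩ := ha
  intro k
  induction k with
  | zero =>
    intro h
    have : (⟨s - 0, by omega⟩ : Fin (s+1)) = Fin.last s := Fin.ext (by simp)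
    rw [this, c2]; omega
  | succ k ih =>
    intro h
    have hk : s - (k+1) < s := by omega
    have := c4 ⟨s - (k+1), hk⟩
    have h1 : (⟨s - (k+1), hk⟩ : Fin s).castSucc = ⟨s - (k+1), by omega⟩ := rfl
    have h2 : (⟨s - (k+1), hk⟩ : Fin s).succ = ⟨s - k, by omega⟩ := Fin.ext (by simp; omega)
    rw [h1, h2] at this
    have := ih (by omega)
    omega

lemma pathSet_eq_empty_of_out (m s t : ℕ) (h : t < 1 ∨ m < t) :
    PathSet m (s+1) t = ∅ := by
  ext a
  simp only [Set.mem_empty_iff_false, iff_false]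
  intro ha
  rw [PathSet, Set.mem_setOf_eq, pathPred_iff] at ha
  obtain ⟨c1, c2, c3, c4⟩ := ha
  have := c3 (Fin.last s)
  omega

lemma pathSet_eq_empty_of_big (m s t : ℕ) (h : s + 1 < t) :
    PathSet m (s+1) t = ∅ := by
  ext a
  simp only [Set.mem_empty_iff_false, iff_false]
  intro ha
  have hend := ((pathPred_iff m s t a).mp ha).2.1
  have := height_le m s t a ha s (by omega)
  have hl : (Fin.last s) = (⟨s, by omega⟩ : Fin (s+1)) := rfl
  rw [hl] at hend
  omega

lemma pathSet_bound_eq (m n s t : ℕ) (hmn : m ≤ n)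
    (hbound : ∀ a ∈ PathSet n (s+1) t, ∀ i, a i ≤ m) :
    PathSet n (s+1) t = PathSet m (s+1) t := by
  ext a
  rw [PathSet, PathSet, Set.mem_setOf_eq, Set.mem_setOf_eq, pathPred_iff, pathPred_iff]
  constructor
  · rintro h
    obtain ⟨c1, c2, c3, c4⟩ := h
    exact ⟨c1, c2, fun i => ⟨(c3 i).1,
      hbound a (by rw [PathSet, Set.mem_setOf_eq, pathPred_iff]; exact ⟨c1, c2, c3, c4⟩) i⟩, c4⟩
  · rintro ⟨c1, c2, c3, c4⟩
    exact ⟨c1, c2, fun i => ⟨(c3 i).1, le_trans (c3 i).2 hmn⟩, c4⟩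

lemma pathSet_small_eq (m n s t : ℕ) (hmn : m ≤ n) (hs : s + 1 ≤ m) :
    PathSet n (s+1) t = PathSet m (s+1) t := by
  apply pathSet_bound_eq m n s t hmn
  intro a ha i
  have := height_le n s t a ha i i.isLt
  have : a i ≤ (i : ℕ) + 1 := by convert this
  have : (i : ℕ) ≤ s := by omega
  omega

lemma pathSet_one_eq (m n s : ℕ) (hmn : m ≤ n) (hm : 1 ≤ m) (hs : s + 1 ≤ 2 * m) :
    PathSet n (s+1) 1 = PathSet m (s+1) 1 := by
  apply pathSet_bound_eq m n s 1 hmn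
  intro a ha i
  have h1 : a i ≤ (i : ℕ) + 1 := by
    have := height_le n s 1 a ha i i.isLt
    convert this
  have h2 : a i ≤ 1 + (s - (i : ℕ)) := by
    have := coheight_le n s 1 a ha (s - (i : ℕ)) (by omega)
    have hi : (⟨s - (s - (i : ℕ)), by omega⟩ : Fin (s+1)) = i :=
      Fin.ext (by simp; omega)
    rw [hi] at this
    omega
  have : (i : ℕ) ≤ s := by omega
  omega

lemma snoc_mem_pathSet (m s t u : ℕ) (hu : t = u + 1 ∨ t = u ∨ u = t + 1)
    (ht1 : 1 ≤ t) (htm : t ≤ m) (b : Fin (s+1) → ℕ) (hb : b ∈ PathSet m (s+1) u) :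
    Fin.snoc b t ∈ PathSet m (s+2) t := by
  rw [PathSet, Set.mem_setOf_eq, pathPred_iff] at hb ⊢
  obtain ⟨c1, c2, c3, c4⟩ := hb
  refine ⟨?_, ?_, ?_, ?_⟩
  · have h0 : (0 : Fin (s+2)) = Fin.castSucc (0 : Fin (s+1)) := rfl
    rw [h0, Fin.snoc_castSucc]; exact c1
  · rw [Fin.snoc_last]
  · intro i
    induction i using Fin.lastCases with
    | last => rw [Fin.snoc_last]; exact ⟨ht1, htm⟩
    | cast j => rw [Fin.snoc_castSucc]; exact c3 j
  · intro i
    induction i using Fin.lastCases with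
    | last =>
      rw [Fin.succ_last, Fin.snoc_last, Fin.snoc_castSucc, c2]
      tauto
    | cast j =>
      rw [Fin.succ_castSucc, Fin.snoc_castSucc, Fin.snoc_castSucc]
      exact c4 j

lemma init_mem_pathSet (m s t : ℕ) (a : Fin (s+2) → ℕ) (ha : a ∈ PathSet m (s+2) t) :
    Fin.init a ∈ PathSet m (s+1) (a (Fin.castSucc (Fin.last s))) := by
  rw [PathSet, Set.mem_setOf_eq, pathPred_iff] at ha ⊢
  obtain ⟨c1, c2, c3, c4⟩ := ha
  refine ⟨?_, ?_, fun i => c3 _, fun i => ?_⟩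
  · simp only [Fin.init]
    have h0 : (Fin.castSucc (0 : Fin (s+1))) = (0 : Fin (s+2)) := rfl
    rw [h0, c1]
  · simp only [Fin.init]
  · simp only [Fin.init]
    rw [← Fin.succ_castSucc]
    exact c4 i.castSucc

lemma junction_step (m s t : ℕ) (a : Fin (s+2) → ℕ) (ha : a ∈ PathSet m (s+2) t) :
    t = a (Fin.castSucc (Fin.last s)) + 1 ∨ t = a (Fin.castSucc (Fin.last s)) ∨
      a (Fin.castSucc (Fin.last s)) = t + 1 := by
  rw [PathSet, Set.mem_setOf_eq, pathPred_iff] at ha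
  obtain ⟨c1, c2, c3, c4⟩ := ha
  have := c4 (Fin.last s)
  rw [Fin.succ_last, c2] at this
  tauto

lemma snoc_init_eq (m s t : ℕ) (a : Fin (s+2) → ℕ) (ha : a ∈ PathSet m (s+2) t) :
    Fin.snoc (Fin.init a) t = a := by
  have c2 := ((pathPred_iff m (s+1) t a).mp ha).2.1
  rw [← c2]
  exact Fin.snoc_init_self a

lemma card_rec (m s t : ℕ) (ht1 : 1 ≤ t) (htm : t ≤ m) :
    Nat.card (PathSet m (s+2) t) =
      Nat.card (PathSet m (s+1) (t-1)) + Nat.card (PathSet m (s+1) t) +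
        Nat.card (PathSet m (s+1) (t+1)) := by
  classical
  set F : (PathSet m (s+1) (t-1) ⊕ PathSet m (s+1) t) ⊕ PathSet m (s+1) (t+1) →
      PathSet m (s+2) t := fun x =>
    match x with
    | .inl (.inl b) => ⟨Fin.snoc b.1 t,
        snoc_mem_pathSet m s t (t-1) (by omega) ht1 htm b.1 b.2⟩
    | .inl (.inr b) => ⟨Fin.snoc b.1 t,
        snoc_mem_pathSet m s t t (by omega) ht1 htm b.1 b.2⟩
    | .inr b => ⟨Fin.snoc b.1 t,
        snoc_mem_pathSet m s t (t+1) (by omega) ht1 htm b.1 b.2⟩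
    with hF
  have hend : ∀ u (b : PathSet m (s+1) u), (b : Fin (s+1) → ℕ) (Fin.last s) = u :=
    fun u b => ((pathPred_iff m s u b.1).mp b.2).2.1
  have hbij : Function.Bijective F := by
    constructor
    · have key : ∀ (u1 u2 : ℕ) (b1 : PathSet m (s+1) u1) (b2 : PathSet m (s+1) u2),
          Fin.snoc (α := fun _ : Fin (s+2) => ℕ) b1.1 t =
            Fin.snoc (α := fun _ : Fin (s+2) => ℕ) b2.1 t → b1.1 = b2.1 ∧ u1 = u2 := by
        intro u1 u2 b1 b2 h
        have hb : b1.1 = b2.1 := by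
          have := congrArg Fin.init h
          simpa using this
        refine ⟨hb, ?_⟩
        have e1 := hend u1 b1
        have e2 := hend u2 b2
        rw [hb] at e1
        omega
      rintro ((b1|b1)|b1) ((b2|b2)|b2) h <;>
        simp only [hF, Subtype.mk.injEq] at h <;>
        obtain ⟨hb, hu⟩ := key _ _ _ _ h <;>
        first
        | (exact congrArg _ (congrArg _ (Subtype.ext hb)))
        | (exact congrArg _ (Subtype.ext hb))
        | omega
    · intro a
      rcases junction_step m s t a.1 a.2 with h | h | h
      · refine ⟨.inl (.inl ⟨Fin.init a.1, ?_⟩), ?_⟩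
        · have := init_mem_pathSet m s t a.1 a.2
          have hu : a.1 (Fin.castSucc (Fin.last s)) = t - 1 := by omega
          rwa [hu] at this
        · simp only [hF]
          exact Subtype.ext (snoc_init_eq m s t a.1 a.2)
      · refine ⟨.inl (.inr ⟨Fin.init a.1, ?_⟩), ?_⟩
        · have := init_mem_pathSet m s t a.1 a.2
          rwa [← h] at this
        · simp only [hF]
          exact Subtype.ext (snoc_init_eq m s t a.1 a.2)
      · refine ⟨.inr ⟨Fin.init a.1, ?_⟩, ?_⟩
        · have := init_mem_pathSet m s t a.1 a.2
          rwa [h] at this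
        · simp only [hF]
          exact Subtype.ext (snoc_init_eq m s t a.1 a.2)
  have := Nat.card_eq_of_bijective F hbij
  rw [Nat.card_sum, Nat.card_sum] at this
  omega

lemma D1T_def (m s t : ℕ) : D1T m s t = Nat.card (PathSet m s t) := rfl

lemma D1T_zero_out (m s t : ℕ) (h : t < 1 ∨ m < t) : D1T m (s+1) t = 0 := by
  rw [D1T_def, pathSet_eq_empty_of_out m s t h]
  simp

lemma D1T_zero_big (m s t : ℕ) (h : s + 1 < t) : D1T m (s+1) t = 0 := by
  rw [D1T_def, pathSet_eq_empty_of_big m s t h]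
  simp

lemma D1T_rec (m s t : ℕ) (ht1 : 1 ≤ t) (htm : t ≤ m) :
    D1T m (s+2) t = D1T m (s+1) (t-1) + D1T m (s+1) t + D1T m (s+1) (t+1) := by
  rw [D1T_def, D1T_def, D1T_def, D1T_def]
  exact card_rec m s t ht1 htm

lemma D1T_small_eq (m n s t : ℕ) (hmn : m ≤ n) (hs : s + 1 ≤ m) :
    D1T n (s+1) t = D1T m (s+1) t := by
  rw [D1T_def, D1T_def, pathSet_small_eq m n s t hmn hs]

lemma D1T_one_eq (m n s : ℕ) (hmn : m ≤ n) (hm : 1 ≤ m) (hs : s + 1 ≤ 2 * m) :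
    D1T n (s+1) 1 = D1T m (s+1) 1 := by
  rw [D1T_def, D1T_def, pathSet_one_eq m n s hmn hm hs]

lemma sum_shift_down (f : ℕ → ℤ) (b : ℕ) :
    ∑ t ∈ Finset.Icc 1 b, f (t-1) = (∑ t ∈ Finset.Icc 1 b, f t) - f b + f 0 := by
  induction b with
  | zero => simp
  | succ b ih =>
    rw [Finset.sum_Icc_succ_top (by omega), Finset.sum_Icc_succ_top (by omega), ih]
    simp
    ring

lemma sum_shift_up (f : ℕ → ℤ) (b : ℕ) :
    ∑ t ∈ Finset.Icc 1 b, f (t+1) = (∑ t ∈ Finset.Icc 1 b, f t) - f 1 + f (b+1) := by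
  induction b with
  | zero => simp
  | succ b ih =>
    rw [Finset.sum_Icc_succ_top (by omega), Finset.sum_Icc_succ_top (by omega), ih]
    ring

lemma sum_rec (b s : ℕ) (hb : 1 ≤ b) :
    ∑ t ∈ Finset.Icc 1 b, (D1T b (s+2) t : ℤ) =
      3 * (∑ t ∈ Finset.Icc 1 b, (D1T b (s+1) t : ℤ))
        - D1T b (s+1) 1 - D1T b (s+1) b := by
  set f : ℕ → ℤ := fun u => (D1T b (s+1) u : ℤ) with hf
  have h0 : f 0 = 0 := by simp [hf, D1T_zero_out b s 0 (by omega)]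
  have hb1 : f (b+1) = 0 := by simp [hf, D1T_zero_out b s (b+1) (by omega)]
  have hcong : ∑ t ∈ Finset.Icc 1 b, (D1T b (s+2) t : ℤ)
      = ∑ t ∈ Finset.Icc 1 b, (f (t-1) + f t + f (t+1)) := by
    apply Finset.sum_congr rfl
    intro t ht
    rw [Finset.mem_Icc] at ht
    rw [D1T_rec b s t ht.1 ht.2]
    push_cast
    rfl
  rw [hcong, Finset.sum_add_distrib, Finset.sum_add_distrib,
    sum_shift_down f b, sum_shift_up f b, h0, hb1]
  ring

lemma D1T_zero_big' (b s t : ℕ) (hs : 1 ≤ s) (h : s < t) : D1T b s t = 0 := by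
  obtain ⟨s', rfl⟩ : ∃ s', s = s' + 1 := ⟨s - 1, by omega⟩
  exact D1T_zero_big b s' t h

lemma D1T_small_eq' (m n s t : ℕ) (hmn : m ≤ n) (hs1 : 1 ≤ s) (hs : s ≤ m) :
    D1T n s t = D1T m s t := by
  obtain ⟨s', rfl⟩ : ∃ s', s = s' + 1 := ⟨s - 1, by omega⟩
  exact D1T_small_eq m n s' t hmn hs

lemma D1T_one_eq' (m n s : ℕ) (hmn : m ≤ n) (hm : 1 ≤ m) (hs1 : 1 ≤ s) (hs : s ≤ 2 * m) :
    D1T n s 1 = D1T m s 1 := by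
  obtain ⟨s', rfl⟩ : ∃ s', s = s' + 1 := ⟨s - 1, by omega⟩
  exact D1T_one_eq m n s' hmn hm hs

lemma sum_rec' (b s : ℕ) (hb : 1 ≤ b) (hs : 1 ≤ s) :
    ∑ t ∈ Finset.Icc 1 b, (D1T b (s+1) t : ℤ) =
      3 * (∑ t ∈ Finset.Icc 1 b, (D1T b s t : ℤ)) - D1T b s 1 - D1T b s b := by
  obtain ⟨s', rfl⟩ : ∃ s', s = s' + 1 := ⟨s - 1, by omega⟩
  exact sum_rec b s' hb


theorem stmt4 (m n : ℕ) (h1 : 1 ≤ m) (h2 : m ≤ n) (h3 : n ≤ 2 * m) :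
    (∑ i ∈ Finset.Icc 1 m, (D1T m n i : ℤ)) =
      (∑ i ∈ Finset.Icc 1 n, (D1T n n i : ℤ)) -
        ∑ i ∈ Finset.Icc m (n - 1), 3 ^ (n - i - 1) * (D1T m i m : ℤ) := by
  have main : ∀ s, m ≤ s → s ≤ n →
      (∑ t ∈ Finset.Icc 1 n, (D1T n s t : ℤ)) - ∑ t ∈ Finset.Icc 1 m, (D1T m s t : ℤ)
        = ∑ i ∈ Finset.Icc m (s - 1), 3 ^ (s - i - 1) * (D1T m i m : ℤ) := by
    intro s hms
    induction s, hms using Nat.le_induction with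
    | base =>
      intro _
      have hempty : Finset.Icc m (m - 1) = ∅ := Finset.Icc_eq_empty (by omega)
      rw [hempty, Finset.sum_empty]
      have hsub : Finset.Icc 1 m ⊆ Finset.Icc 1 n := Finset.Icc_subset_Icc_right h2
      have e1 : ∑ t ∈ Finset.Icc 1 n, (D1T n m t : ℤ)
          = ∑ t ∈ Finset.Icc 1 m, (D1T n m t : ℤ) := by
        refine (Finset.sum_subset hsub ?_).symm
        intro t ht hnt
        rw [Finset.mem_Icc] at ht hnt
        rw [D1T_zero_big' n m t h1 (by omega)]
        simp
      rw [e1]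
      have e2 : ∀ t ∈ Finset.Icc 1 m, (D1T n m t : ℤ) = (D1T m m t : ℤ) := by
        intro t _
        rw [D1T_small_eq' m n m t h2 h1 le_rfl]
      rw [Finset.sum_congr rfl e2]
      ring
    | succ s hs ih =>
      intro hsn
      have hs1 : 1 ≤ s := le_trans h1 hs
      have hslt : s < n := by omega
      have ihe := ih (by omega)
      obtain ⟨s', rfl⟩ : ∃ s', s = s' + 1 := ⟨s - 1, by omega⟩
      rw [sum_rec' n (s' + 1) (by omega) hs1, sum_rec' m (s' + 1) h1 hs1]
      rw [D1T_one_eq' m n (s' + 1) h2 h1 hs1 (by omega)]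
      rw [D1T_zero_big' n (s' + 1) n hs1 hslt]
      simp only [Nat.add_sub_cancel] at ihe ⊢
      rw [Finset.sum_Icc_succ_top (by omega : m ≤ s' + 1)]
      have e4 : ∑ k ∈ Finset.Icc m s', (3:ℤ) ^ (s' + 1 + 1 - k - 1) * (D1T m k m : ℤ)
          = 3 * ∑ k ∈ Finset.Icc m s', (3:ℤ) ^ (s' + 1 - k - 1) * (D1T m k m : ℤ) := by
        rw [Finset.mul_sum]
        apply Finset.sum_congr rfl
        intro k hk
        rw [Finset.mem_Icc] at hk
        rw [show s' + 1 + 1 - k - 1 = (s' + 1 - k - 1) + 1 from by omega, pow_succ]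
        ring
      rw [e4, show s' + 1 + 1 - (s' + 1) - 1 = 0 from by omega, pow_zero]
      push_cast
      linarith [ihe]
  have := main n h2 le_rfl
  linarith
end

section
/- For odd n = 2k-1, the total number of perfect lattice paths in the m×n table satisfies I_m(n) = Σ_{i=1}^{m} D(k,i)^2. -/
set_option maxHeartbeats 1000000



/-- `Dm m s t`: number of sequences `a_1,...,a_s` with arbitrary first entry,
`a_s = t`, all entries in `{1,...,m}`, and consecutive differences in `{1,0,-1}`. -/
noncomputable def Dm (m s t : ℕ) : ℕ :=
  Nat.card {a : Fin s → ℕ //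
    (∀ i : Fin s, (i : ℕ) = s - 1 → a i = t) ∧
    (∀ i, 1 ≤ a i ∧ a i ≤ m) ∧
    (∀ i j : Fin s, (j : ℕ) = (i : ℕ) + 1 →
      a j = a i + 1 ∨ a j = a i ∨ a i = a j + 1)}
/-- `Itab m n`: number of sequences `a_1,...,a_n` with all entries in `{1,...,m}`
and consecutive differences in `{1,0,-1}` (perfect lattice paths). -/
noncomputable def Itab (m n : ℕ) : ℕ :=
  Nat.card {a : Fin n → ℕ //
    (∀ i, 1 ≤ a i ∧ a i ≤ m) ∧
    (∀ i j : Fin n, (j : ℕ) = (i : ℕ) + 1 →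
      a j = a i + 1 ∨ a j = a i ∨ a i = a j + 1)}

/-- The subtype counted by `Dm`. -/
def DSet (m s t : ℕ) := {a : Fin s → ℕ //
    (∀ i : Fin s, (i : ℕ) = s - 1 → a i = t) ∧
    (∀ i, 1 ≤ a i ∧ a i ≤ m) ∧
    (∀ i j : Fin s, (j : ℕ) = (i : ℕ) + 1 →
      a j = a i + 1 ∨ a j = a i ∨ a i = a j + 1)}

/-- The subtype counted by `Itab`. -/
def ISet (m n : ℕ) := {a : Fin n → ℕ //
    (∀ i, 1 ≤ a i ∧ a i ≤ m) ∧
    (∀ i j : Fin n, (j : ℕ) = (i : ℕ) + 1 →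
      a j = a i + 1 ∨ a j = a i ∨ a i = a j + 1)}

instance (m s t : ℕ) : Finite (DSet m s t) := by
  apply Finite.of_injective
    (fun x : DSet m s t => (fun i => (⟨x.1 i, by have := (x.2.2.1 i).2; omega⟩ : Fin (m+1))
      : Fin s → Fin (m+1)))
  intro x y h
  apply Subtype.ext; funext i
  have := congrFun h i
  simpa [Fin.ext_iff] using this

instance (m n : ℕ) : Finite (ISet m n) := by
  apply Finite.of_injective
    (fun x : ISet m n => (fun i => (⟨x.1 i, by have := (x.2.1 i).2; omega⟩ : Fin (m+1))
      : Fin n → Fin (m+1)))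
  intro x y h
  apply Subtype.ext; funext i
  have := congrFun h i
  simpa [Fin.ext_iff] using this

theorem stmt7 (m n k : ℕ) (hk : 1 ≤ k) (hn : n = 2 * k - 1) :
    Itab m n = ∑ i ∈ Finset.Icc 1 m, (Dm m k i) ^ 2 := by
  subst hn
  classical
  set n := 2 * k - 1 with hn
  have hkn : k - 1 < n := by omega
  -- the middle-value map
  let f : ISet m n → ↥(Finset.Icc 1 m) := fun x =>
    ⟨x.1 ⟨k - 1, hkn⟩, by
      have := x.2.1 ⟨k - 1, hkn⟩
      simp only [Finset.mem_Icc]; omega⟩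
  -- fiber equivalence
  have fib : ∀ y : ↥(Finset.Icc 1 m),
      Nat.card {x : ISet m n // f x = y} = Dm m k y ^ 2 := by
    intro y
    obtain ⟨t, ht⟩ := y
    have e : {x : ISet m n // f x = ⟨t, ht⟩} ≃ DSet m k t × DSet m k t := by
      refine
        { toFun := fun x =>
            (⟨fun j => x.1.1 ⟨j, by omega⟩, ?_, ?_, ?_⟩,
             ⟨fun j => x.1.1 ⟨2 * k - 2 - j, by omega⟩, ?_, ?_, ?_⟩)
          invFun := fun p =>
            ⟨⟨fun j => if h : (j : ℕ) < k then p.1.1 ⟨j, h⟩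
                else p.2.1 ⟨2 * k - 2 - j, by omega⟩, ?_, ?_⟩, ?_⟩
          left_inv := ?_
          right_inv := ?_ }
      · -- first half ends at t
        intro i hi
        have hx := x.2
        have : x.1.1 ⟨k - 1, hkn⟩ = t := congrArg Subtype.val hx
        have hval : (⟨(i : ℕ), by have := i.2; omega⟩ : Fin n) = ⟨k - 1, hkn⟩ := by
          apply Fin.ext; simpa using hi
        dsimp only; rw [hval]; exact this
      · intro i; exact x.1.2.1 _
      · intro i j hij
        exact x.1.2.2 ⟨i, by omega⟩ ⟨j, by omega⟩ (by simpa using hij)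
      · -- second half ends at t
        intro i hi
        have hx := x.2
        have : x.1.1 ⟨k - 1, hkn⟩ = t := congrArg Subtype.val hx
        have hval : (⟨2 * k - 2 - (i : ℕ), by omega⟩ : Fin n) = ⟨k - 1, hkn⟩ := by
          apply Fin.ext; simp only [hi]; omega
        dsimp only; rw [hval]; exact this
      · intro i; exact x.1.2.1 _
      · intro i j hij
        have h := x.1.2.2 ⟨2 * k - 2 - (j : ℕ), by omega⟩ ⟨2 * k - 2 - (i : ℕ), by omega⟩
          (by simp only; have := j.2; omega)
        tauto
      · -- bounds for the glued sequence
        intro i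
        dsimp only
        split
        · exact p.1.2.2.1 _
        · exact p.2.2.2.1 _
      · -- step condition for the glued sequence
        intro i j hij
        dsimp only
        by_cases hjk : (j : ℕ) < k
        · have hik : (i : ℕ) < k := by omega
          rw [dif_pos hjk, dif_pos hik]
          exact p.1.2.2.2 ⟨i, hik⟩ ⟨j, hjk⟩ (by simpa using hij)
        · by_cases hik : (i : ℕ) < k
          · -- seam: i = k-1, j = k
            have hjlt : (j : ℕ) < n := j.2
            have hik' : (i : ℕ) = k - 1 := by omega
            have hk2 : 2 ≤ k := by omega
            rw [dif_neg hjk, dif_pos hik]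
            have hb : p.1.1 ⟨i, hik⟩ = t := p.1.2.1 _ (by simpa using hik')
            have hc : p.2.1 ⟨k - 1, by omega⟩ = t := p.2.2.1 _ (by simp)
            have hstep := p.2.2.2.2 ⟨k - 2, by omega⟩ ⟨k - 1, by omega⟩ (by simp; omega)
            have hji : (⟨2 * k - 2 - (j : ℕ), by omega⟩ : Fin k) = ⟨k - 2, by omega⟩ := by
              apply Fin.ext; simp; omega
            have h2 := congrArg (Subtype.val p.2) hji
            omega
          · rw [dif_neg hjk, dif_neg hik]
            have hjlt : (j : ℕ) < n := j.2
            have hstep := p.2.2.2.2 ⟨2 * k - 2 - (j : ℕ), by omega⟩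
              ⟨2 * k - 2 - (i : ℕ), by omega⟩ (by simp; omega)
            tauto
      · -- middle value is t
        apply Subtype.ext
        dsimp only [f]
        rw [dif_pos (by omega : k - 1 < k)]
        exact p.1.2.1 _ rfl
      · -- left inverse
        intro x
        apply Subtype.ext; apply Subtype.ext; funext j
        dsimp only
        split
        · rfl
        · next h =>
          have : (⟨2 * k - 2 - (2 * k - 2 - (j : ℕ)), by have := j.2; omega⟩ : Fin n) = j := by
            apply Fin.ext; simp; have := j.2; omega
          rw [this]
      · -- right inverse
        intro p
        obtain ⟨⟨b, hb1, hb2, hb3⟩, ⟨c, hc1, hc2, hc3⟩⟩ := p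
        refine Prod.ext (Subtype.ext ?_) (Subtype.ext ?_) <;> funext j <;> dsimp only
        · rw [dif_pos j.2]
        · by_cases hj : (j : ℕ) = k - 1
          · rw [dif_pos (by omega : 2 * k - 2 - (j : ℕ) < k)]
            rw [hb1 _ (by simp; omega), (hc1 j hj).symm]
          · rw [dif_neg (by have := j.2; omega : ¬ 2 * k - 2 - (j : ℕ) < k)]
            congr 1
            apply Fin.ext; simp; have := j.2; omega
    rw [Nat.card_congr e, Nat.card_prod, sq]
    rfl
  -- assemble
  have : Itab m n = Nat.card (Σ y : ↥(Finset.Icc 1 m), {x : ISet m n // f x = y}) := by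
    exact (Nat.card_congr (Equiv.sigmaFiberEquiv f)).symm
  rw [this]
  have := Fintype.ofFinite (ISet m n)
  rw [Nat.card_eq_fintype_card, Fintype.card_sigma]
  rw [← Finset.sum_coe_sort (Finset.Icc 1 m) (fun i => Dm m k i ^ 2)]
  congr 1
  funext y
  rw [← fib y, Nat.card_eq_fintype_card]
end
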